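/- For n ≥ 4, the function w(r) = ((n-2)/n)^{1/(n-2)} · r^{n/(n-2)} is a sub-solution of the ODE v' = (1+v²)(r/v)^{n-1} for all r > 0: w' ≤ (1+w²)(r/w)^{n-1}, with w' - (1+w²)(r/w)^{n-1} = -((n-2)/n)^{-(n-1)/(n-2)} r^{-2(n-1)/(n-2)} < 0. Consequently the solution with v(0)=0 satisfies v(r) ≥ w(r) for all r > 0. -/

import Mathlib

/-- For n ≥ 4, w(r) = ((n-2)/n)^{1/(n-2)} r^{n/(n-2)} is a sub-solution of
v' = (1+v²)(r/v)^{n-1}, with the exact deficit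
w' - (1+w²)(r/w)^{n-1} = -((n-2)/n)^{-(n-1)/(n-2)} r^{-2(n-1)/(n-2)} < 0,
and consequently the solution with v(0) = 0 satisfies v ≥ w on (0,∞). -/
theorem stmt14 (n : ℕ) (hn : 4 ≤ n)
    (w dw : ℝ → ℝ)
    (hw : ∀ r : ℝ, w r =
      (((n : ℝ) - 2) / n) ^ ((1 : ℝ) / ((n : ℝ) - 2)) * r ^ ((n : ℝ) / ((n : ℝ) - 2)))
    (hdw : ∀ r : ℝ, dw r =
      (((n : ℝ) - 2) / n) ^ ((1 : ℝ) / ((n : ℝ) - 2))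
        * ((n : ℝ) / ((n : ℝ) - 2)) * r ^ ((n : ℝ) / ((n : ℝ) - 2) - 1))
    (v : ℝ → ℝ) (hv0 : v 0 = 0)
    (hcont : ContinuousOn v (Set.Ici 0))
    (hvpos : ∀ r : ℝ, 0 < r → 0 < v r)
    (hode : ∀ r : ℝ, 0 < r → HasDerivAt v ((1 + (v r) ^ 2) * (r / v r) ^ (n - 1)) r) :
    (∀ r : ℝ, 0 < r → HasDerivAt w (dw r) r) ∧
    (∀ r : ℝ, 0 < r →
      dw r - (1 + (w r) ^ 2) * (r / w r) ^ (n - 1)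
        = -((((n : ℝ) - 2) / n) ^ (-(((n : ℝ) - 1) / ((n : ℝ) - 2))))
            * r ^ (-(2 * ((n : ℝ) - 1) / ((n : ℝ) - 2))) ∧
      dw r ≤ (1 + (w r) ^ 2) * (r / w r) ^ (n - 1)) ∧
    (∀ r : ℝ, 0 < r → w r ≤ v r) := by
  have hn4 : (4:ℝ) ≤ (n:ℝ) := by exact_mod_cast hn
  have hN2 : (0:ℝ) < (n:ℝ) - 2 := by linarith
  have hN : (0:ℝ) < (n:ℝ) := by linarith
  set N : ℝ := (n:ℝ) with hNdef
  have hb : (0:ℝ) < (N - 2) / N := div_pos hN2 hN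
  set b : ℝ := (N - 2) / N with hbdef
  set c : ℝ := b ^ ((1:ℝ)/(N-2)) with hcdef
  have hcpos : 0 < c := Real.rpow_pos_of_pos hb _
  set α : ℝ := N / (N - 2) with hαdef
  have hαpos : 0 < α := div_pos hN (by linarith)
  have hα1 : α - 1 = 2 / (N - 2) := by
    rw [hαdef]; field_simp; ring
  -- Part 1: derivative
  have part1 : ∀ r : ℝ, 0 < r → HasDerivAt w (dw r) r := by
    intro r hr
    have h1 : HasDerivAt (fun x : ℝ => x ^ α) (α * r ^ (α - 1)) r :=
      Real.hasDerivAt_rpow_const (Or.inl (ne_of_gt hr))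
    have h2 := h1.const_mul c
    have hfun : w = fun x : ℝ => c * x ^ α := funext hw
    rw [hfun, hdw r]
    rw [mul_assoc]; exact h2
  -- positivity of w
  have hwpos : ∀ r : ℝ, 0 < r → 0 < w r := by
    intro r hr
    rw [hw r]
    exact mul_pos hcpos (Real.rpow_pos_of_pos hr _)
  have hcast : ((n - 1 : ℕ) : ℝ) = N - 1 := by
    have : (1:ℕ) ≤ n := by omega
    push_cast [Nat.cast_sub this]
    ring
  -- key: value of (r / w r)^(n-1)
  have keyA : ∀ r : ℝ, 0 < r →
      (r / w r) ^ (n - 1) = b ^ (-((N-1)/(N-2))) * r ^ (-(2*(N-1)/(N-2))) := by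
    intro r hr
    have hwr := hwpos r hr
    have hdiv : r / w r = r ^ (1 - α) / c := by
      rw [hw r, div_mul_eq_div_div_swap, Real.rpow_sub hr, Real.rpow_one]
    have hdivpos : 0 ≤ r ^ (1 - α) := (Real.rpow_pos_of_pos hr _).le
    have e1 : (1 - α)*(N-1) = -(2*(N-1)/(N-2)) := by rw [hαdef]; field_simp; ring
    have e2 : (1:ℝ)/(N-2)*(N-1) = (N-1)/(N-2) := by ring
    rw [← Real.rpow_natCast (r / w r) (n - 1), hcast, hdiv,
      Real.div_rpow hdivpos hcpos.le, ← Real.rpow_mul hr.le,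
      hcdef, ← Real.rpow_mul hb.le, e1, e2, div_eq_mul_inv,
      ← Real.rpow_neg hb.le, mul_comm]
  -- key: w^2 * (r/w)^(n-1) = dw r
  have keyB : ∀ r : ℝ, 0 < r →
      (w r) ^ 2 * (r / w r) ^ (n - 1) = dw r := by
    intro r hr
    have hw2 : (w r) ^ 2 = b ^ ((2:ℝ)/(N-2)) * r ^ (2 * α) := by
      rw [hw r, mul_pow, hcdef, ← Real.rpow_natCast (b ^ _) 2, ← Real.rpow_mul hb.le,
        ← Real.rpow_natCast (r ^ α) 2, ← Real.rpow_mul hr.le,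
        show ((2:ℕ):ℝ) = 2 by norm_num,
        show (1:ℝ)/(N-2)*2 = 2/(N-2) by ring, show α*2 = 2*α by ring]
    rw [keyA r hr, hw2, hdw r]
    have hcomb : b ^ ((2:ℝ)/(N-2)) * r ^ (2 * α) * (b ^ (-((N-1)/(N-2))) * r ^ (-(2*(N-1)/(N-2))))
        = (b ^ ((2:ℝ)/(N-2)) * b ^ (-((N-1)/(N-2)))) * (r ^ (2*α) * r ^ (-(2*(N-1)/(N-2)))) := by
      ring
    have e3 : (2:ℝ)/(N-2) + -((N-1)/(N-2)) = 1/(N-2) + -1 := by field_simp; ring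
    have e4 : 2*α + -(2*(N-1)/(N-2)) = α - 1 := by rw [hαdef]; field_simp; ring
    have hbinv : b⁻¹ = α := by rw [hbdef, hαdef, inv_div]
    rw [hcomb, ← Real.rpow_add hb, ← Real.rpow_add hr, e3, e4,
      Real.rpow_add hb, Real.rpow_neg_one, hbinv, ← hcdef]
  -- Part 2
  have part2eq : ∀ r : ℝ, 0 < r →
      dw r - (1 + (w r) ^ 2) * (r / w r) ^ (n - 1)
        = -(b ^ (-((N-1)/(N-2)))) * r ^ (-(2*(N-1)/(N-2))) := by
    intro r hr
    have hA := keyA r hr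
    have hB := keyB r hr
    rw [add_mul, one_mul]
    rw [hA] at *
    linarith [hB]
  have part2le : ∀ r : ℝ, 0 < r →
      dw r ≤ (1 + (w r) ^ 2) * (r / w r) ^ (n - 1) := by
    intro r hr
    have h := part2eq r hr
    have hpos : 0 < b ^ (-((N-1)/(N-2))) * r ^ (-(2*(N-1)/(N-2))) :=
      mul_pos (Real.rpow_pos_of_pos hb _) (Real.rpow_pos_of_pos hr _)
    nlinarith [h, hpos]
  -- monotonicity of the RHS in v
  have hmono : ∀ (r a B : ℝ), 0 < r → 0 < a → a < B →
      (1 + B^2) * (r / B)^(n-1) < (1 + a^2) * (r / a)^(n-1) := by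
    intro r a B hr ha haB
    have hB : 0 < B := ha.trans haB
    have hm3 : n - 1 = (n - 3) + 2 := by omega
    rw [div_pow, div_pow, ← mul_div_assoc, ← mul_div_assoc,
      div_lt_div_iff₀ (pow_pos hB _) (pow_pos ha _)]
    have hrm : 0 < r ^ (n-1) := pow_pos hr _
    have h1 : (1 + B^2) * a^(n-1) < (1 + a^2) * B^(n-1) := by
      have hpow3 : a^(n-3) ≤ B^(n-3) := pow_le_pow_left₀ ha.le haB.le _
      have hA : a^(n-3)*a^2 < B^(n-3)*B^2 :=
        mul_lt_mul' hpow3 (by nlinarith) (sq_nonneg a) (pow_pos hB _)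
      have hB2 : B^2*(a^(n-3)*a^2) ≤ a^2*(B^(n-3)*B^2) := by
        have h3 : a^2*B^2*a^(n-3) ≤ a^2*B^2*B^(n-3) :=
          mul_le_mul_of_nonneg_left hpow3 (by positivity)
        linear_combination h3
      rw [hm3, pow_add, pow_add]
      nlinarith [hA, hB2]
    calc (1 + B^2) * r^(n-1) * a^(n-1) = ((1+B^2) * a^(n-1)) * r^(n-1) := by ring
      _ < ((1+a^2) * B^(n-1)) * r^(n-1) := mul_lt_mul_of_pos_right h1 hrm
      _ = (1 + a^2) * r^(n-1) * B^(n-1) := by ring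
  -- Part 3
  have hwcont : Continuous w := by
    have hc : Continuous fun x : ℝ => c * x ^ α :=
      continuous_const.mul (continuous_id.rpow_const (fun x => Or.inr hαpos.le))
    rwa [show w = fun x : ℝ => c * x ^ α from funext hw]
  have hw0 : w 0 = 0 := by
    rw [hw 0, Real.zero_rpow (ne_of_gt hαpos), mul_zero]
  have part3 : ∀ r : ℝ, 0 < r → w r ≤ v r := by
    intro r hr
    by_contra hlt
    push_neg at hlt
    set S : Set ℝ := Set.Icc 0 r ∩ (fun s => v s - w s) ⁻¹' Set.Ici 0 with hS
    have hS0 : (0:ℝ) ∈ S := ⟨⟨le_refl 0, hr.le⟩, by simp [hw0, hv0]⟩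
    have hsub : Set.Icc (0:ℝ) r ⊆ Set.Ici 0 := fun x hx => hx.1
    have hgcont : ContinuousOn (fun s => v s - w s) (Set.Icc 0 r) :=
      (hcont.mono hsub).sub hwcont.continuousOn
    have hSclosed : IsClosed S :=
      ContinuousOn.preimage_isClosed_of_isClosed hgcont isClosed_Icc isClosed_Ici
    have hbdd : BddAbove S := ⟨r, fun x hx => hx.1.2⟩
    set t : ℝ := sSup S with htdef
    have ht : t ∈ S := hSclosed.csSup_mem ⟨0, hS0⟩ hbdd
    have ht0 : 0 ≤ t := ht.1.1
    have htr : t < r := by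
      rcases lt_or_eq_of_le ht.1.2 with h | h
      · exact h
      · exfalso
        have := ht.2
        rw [h] at this
        simp only [Set.mem_preimage, Set.mem_Ici] at this
        linarith
    have hgt : ∀ s : ℝ, t < s → s ≤ r → v s < w s := by
      intro s hts hsr
      by_contra h
      push_neg at h
      have hsS : s ∈ S := ⟨⟨le_trans ht0 hts.le, hsr⟩, by
        simp only [Set.mem_preimage, Set.mem_Ici]; linarith⟩
      exact absurd (le_csSup hbdd hsS) (not_le.2 hts)
    have hsm : StrictMonoOn (fun s => v s - w s) (Set.Icc t r) := by
      apply strictMonoOn_of_deriv_pos (convex_Icc t r)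
      · exact hgcont.mono (Set.Icc_subset_Icc_left ht0)
      · intro x hx
        rw [interior_Icc] at hx
        have hx0 : 0 < x := lt_of_le_of_lt ht0 hx.1
        have hdx : HasDerivAt (fun s => v s - w s)
            ((1 + (v x) ^ 2) * (x / v x) ^ (n - 1) - dw x) x :=
          (hode x hx0).sub (part1 x hx0)
        rw [hdx.deriv]
        have h1 : dw x ≤ (1 + (w x)^2)*(x/w x)^(n-1) := part2le x hx0
        have h2 : (1 + (w x)^2)*(x/w x)^(n-1) < (1 + (v x)^2)*(x / v x)^(n-1) :=
          hmono x (v x) (w x) hx0 (hvpos x hx0) (hgt x hx.1 hx.2.le)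
        linarith
    have hgr : (fun s => v s - w s) t < (fun s => v s - w s) r :=
      hsm ⟨le_rfl, ht.1.2⟩ ⟨ht.1.2, le_rfl⟩ htr
    have hgt0 : 0 ≤ v t - w t := ht.2
    simp only at hgr
    linarith
  exact ⟨part1, fun r hr => ⟨part2eq r hr, part2le r hr⟩, part3⟩
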